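/- Let C and ρ be closed convex cones in ℝ^n with ρ pointed (i.e. ρ ∩ (−ρ) = {0}) and ρ ≠ {0}. If −ρ ⊆ ρ + (−C*), where C* denotes the dual cone of C, then C* ∩ relint(ρ) ≠ ∅. -/

import Mathlib

open Pointwise

/-- Convex-geometric step of Lemma 2.13: if `C`, `ρ` are closed convex cones, `ρ` pointed
and non-zero, and `-ρ ⊆ ρ + (-C*)`, then `C*` meets the relative interior of `ρ`. -/
theorem stmt_3 (n : ℕ) (C ρ : Set (EuclideanSpace ℝ (Fin n)))
    (hCc : Convex ℝ C) (hCcl : IsClosed C) (hCcone : ∀ x ∈ C, ∀ c : ℝ, 0 ≤ c → c • x ∈ C)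
    (hρc : Convex ℝ ρ) (hρcl : IsClosed ρ) (hρcone : ∀ x ∈ ρ, ∀ c : ℝ, 0 ≤ c → c • x ∈ ρ)
    (hpointed : ρ ∩ (-ρ) = {0}) (hne : ρ ≠ {0})
    (Cstar : Set (EuclideanSpace ℝ (Fin n)))
    (hCstar : Cstar = {v | ∀ γ ∈ C, (0 : ℝ) ≤ inner ℝ γ v})
    (hsub : -ρ ⊆ ρ + (-Cstar)) :
    (Cstar ∩ intrinsicInterior ℝ ρ).Nonempty := by
  -- 0 ∈ ρ
  have h0 : (0 : EuclideanSpace ℝ (Fin n)) ∈ ρ := by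
    have : (0 : EuclideanSpace ℝ (Fin n)) ∈ ρ ∩ (-ρ) := by rw [hpointed]; exact rfl
    exact this.1
  -- ρ is closed under addition
  have hsum : ∀ a ∈ ρ, ∀ b ∈ ρ, a + b ∈ ρ := by
    intro a ha b hb
    have hmid : (1 / 2 : ℝ) • a + (1 / 2 : ℝ) • b ∈ ρ :=
      hρc ha hb (by norm_num) (by norm_num) (by norm_num)
    have h2 := hρcone _ hmid 2 (by norm_num)
    convert h2 using 1
    module
  -- pick u in the relative interior of ρ
  obtain ⟨u, hu⟩ := Set.Nonempty.intrinsicInterior hρc ⟨0, h0⟩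
  have hρu : u ∈ ρ := intrinsicInterior_subset hu
  have hmu : -u ∈ -ρ := by simpa using hρu
  obtain ⟨v, hv, z, hz, hvz⟩ := hsub hmu
  have hzC : -z ∈ Cstar := Set.mem_neg.1 hz
  have hvz' : v + z = -u := hvz
  have hzeq : z = -u - v := eq_sub_of_add_eq' hvz'
  have hzuv : -z = u + v := by rw [hzeq]; abel
  refine ⟨u + v, hzuv ▸ hzC, ?_⟩
  -- now show u + v ∈ intrinsicInterior ℝ ρ
  rw [mem_intrinsicInterior] at hu ⊢
  set A := affineSpan ℝ ρ with hA
  have hvA : v ∈ A := subset_affineSpan ℝ ρ hv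
  have h0A : (0 : EuclideanSpace ℝ (Fin n)) ∈ A := subset_affineSpan ℝ ρ h0
  have hdir : v ∈ A.direction := by
    simpa using AffineSubspace.vsub_mem_direction hvA h0A
  have hmemadd : ∀ x : A, ((x : EuclideanSpace ℝ (Fin n)) + v) ∈ A := fun x => by
    simpa [add_comm] using AffineSubspace.vadd_mem_of_mem_direction hdir x.2
  have hmemsub : ∀ x : A, ((x : EuclideanSpace ℝ (Fin n)) - v) ∈ A := fun x => by
    have := AffineSubspace.vadd_mem_of_mem_direction
      (Submodule.neg_mem _ hdir) x.2
    simpa [sub_eq_add_neg, add_comm] using this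
  let g : A ≃ₜ A :=
    { toFun := fun x => ⟨(x : EuclideanSpace ℝ (Fin n)) + v, hmemadd x⟩
      invFun := fun x => ⟨(x : EuclideanSpace ℝ (Fin n)) - v, hmemsub x⟩
      left_inv := fun x => by ext; simp
      right_inv := fun x => by ext; simp
      continuous_toFun := (continuous_subtype_val.add continuous_const).subtype_mk _
      continuous_invFun := (continuous_subtype_val.sub continuous_const).subtype_mk _ }
  obtain ⟨y, hy, hyu⟩ := hu
  refine ⟨g y, ?_, by show (y : EuclideanSpace ℝ (Fin n)) + v = u + v; rw [hyu]⟩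
  have himg : g '' ((↑) ⁻¹' ρ : Set A) ⊆ ((↑) ⁻¹' ρ : Set A) := by
    rintro _ ⟨x, hx, rfl⟩
    exact hsum _ hx _ hv
  have hgy : g y ∈ interior (g '' ((↑) ⁻¹' ρ : Set A)) := by
    rw [← Homeomorph.image_interior]
    exact Set.mem_image_of_mem g hy
  exact interior_mono himg hgy
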